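/- Let X be an infinite, boundedly compact metric space without isolated points, and T: X → X a homeomorphism that is transitive and such that the set of nonperiodic points with closed discrete orbits is dense. Then T is maximally sensitive: for every ε > 0, every x ∈ X and every δ > 0 there exist n > 0 and y with d(x,y) < δ and d(T^n x, T^n y) > ε. -/

import Mathlib

/-- Let `X` be an infinite, boundedly compact (proper) metric space
without isolated points and `T : X → X` a transitive homeomorphism such that the set of
nonperiodic points with closed discrete orbits is dense. Then `T` is maximally
sensitive: for every `ε > 0`, `x ∈ X`, `δ > 0` there are `n > 0` and `y` with
`d(x,y) < δ` and `d(Tⁿx, Tⁿy) > ε`. -/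
theorem discrete_chaos_maximal_sensitivity
    {X : Type*} [MetricSpace X] [ProperSpace X] [Infinite X]
    (hni : ∀ x : X, (nhdsWithin x {x}ᶜ).NeBot)
    (T : Equiv.Perm X) (hT : Continuous T) (hT' : Continuous T.symm)
    (htrans : ∃ x : X, Dense (Set.range fun n : ℤ => (T ^ n) x))
    (hdense : Dense {y : X |
      (∀ n : ℤ, n ≠ 0 → (T ^ n) y ≠ y) ∧
      IsClosed (Set.range fun n : ℤ => (T ^ n) y) ∧
      DiscreteTopology (Set.range fun n : ℤ => (T ^ n) y)}) :
    ∀ ε > (0 : ℝ), ∀ x : X, ∀ δ > (0 : ℝ), ∃ n : ℕ, 0 < n ∧ ∃ y : X,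
      dist x y < δ ∧ ε < dist ((T ^ (n : ℤ)) x) ((T ^ (n : ℤ)) y) := by
  intro ε hε x δ hδ
  by_contra hcon
  push_neg at hcon
  -- hcon : ∀ n, 0 < n → ∀ y, dist x y < δ → dist (T^n x) (T^n y) ≤ ε
  -- pick a nonperiodic point with closed discrete orbit near x
  obtain ⟨y, ⟨hy1, hy2, hy3⟩, hxy⟩ := hdense.exists_dist_lt x hδ
  -- the orbit map of y is injective
  have hf : Function.Injective (fun n : ℤ => (T ^ n) y) := by
    intro a b hab
    by_contra hne
    apply hy1 (a - b) (sub_ne_zero.mpr hne)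
    have h1 : (T ^ (a - b)) y = (T ^ (-b)) ((T ^ a) y) := by
      rw [← Equiv.Perm.mul_apply, ← zpow_add, neg_add_eq_sub]
    have h2 : (T ^ (-b)) ((T ^ b) y) = y := by
      rw [← Equiv.Perm.mul_apply, ← zpow_add, neg_add_cancel, zpow_zero,
        Equiv.Perm.one_apply]
    simp only at hab
    rw [h1, hab, h2]
  set R : ℝ := 2 * ε + δ / 2 with hR
  -- only finitely many orbit points of y are within distance R of x
  have hKfin : {n : ℤ | dist ((T ^ n) y) x ≤ R}.Finite := by
    have hK : IsCompact ((Set.range fun n : ℤ => (T ^ n) y) ∩ Metric.closedBall x R) :=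
      (isCompact_closedBall x R).of_isClosed_subset
        (hy2.inter Metric.isClosed_closedBall) Set.inter_subset_right
    haveI : DiscreteTopology
        ↥((Set.range fun n : ℤ => (T ^ n) y) ∩ Metric.closedBall x R) :=
      hy3.of_subset Set.inter_subset_left
    have hfin := hK.finite (isDiscrete_iff_discreteTopology.mpr this)
    have heq : {n : ℤ | dist ((T ^ n) y) x ≤ R} =
        (fun n : ℤ => (T ^ n) y) ⁻¹'
          ((Set.range fun n : ℤ => (T ^ n) y) ∩ Metric.closedBall x R) := by
      ext n
      simp only [Set.mem_setOf_eq, Set.mem_preimage, Set.mem_inter_iff,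
        Metric.mem_closedBall]
      exact ⟨fun h => ⟨⟨n, rfl⟩, h⟩, fun h => h.2⟩
    rw [heq]
    exact hfin.preimage hf.injOn
  obtain ⟨N, hN⟩ := hKfin.bddAbove
  -- for large positive k, T^k x is far from x
  have claim2 : ∀ k : ℤ, N < k → 0 < k → ε + δ / 2 < dist ((T ^ k) x) x := by
    intro k hk hk0
    have hfar : ¬ dist ((T ^ k) y) x ≤ R := fun hle => absurd (hN hle) (not_le.mpr hk)
    push_neg at hfar
    have hkn : 0 < k.toNat := by omega
    have hck := hcon k.toNat hkn y hxy
    rw [Int.toNat_of_nonneg hk0.le] at hck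
    have htri := dist_triangle ((T ^ k) y) ((T ^ k) x) x
    have hcomm : dist ((T ^ k) y) ((T ^ k) x) = dist ((T ^ k) x) ((T ^ k) y) :=
      dist_comm _ _
    rw [hR] at hfar
    linarith
  -- no nonempty open set is finite (no isolated points)
  have key_open : ∀ U : Set X, IsOpen U → ∀ u ∈ U, ¬ U.Finite := by
    intro U hU u hu hUf
    have hclosed : IsClosed (U \ {u}) := (hUf.subset Set.diff_subset).isClosed
    have hopen : IsOpen (U \ (U \ {u})) := hU.sdiff hclosed
    have heq : U \ (U \ {u}) = {u} := by
      ext v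
      simp only [Set.mem_diff, Set.mem_singleton_iff, not_and, not_not]
      constructor
      · rintro ⟨hvU, hv⟩; exact hv hvU
      · rintro rfl; exact ⟨hu, fun _ => rfl⟩
    rw [heq] at hopen
    haveI := hni u
    have h1 : ({u} : Set X) ∈ nhdsWithin u {u}ᶜ :=
      mem_nhdsWithin_of_mem_nhds (hopen.mem_nhds rfl)
    have h2 : ({u}ᶜ : Set X) ∈ nhdsWithin u {u}ᶜ := self_mem_nhdsWithin
    have := Filter.nonempty_of_mem (Filter.inter_mem h1 h2)
    rw [Set.inter_compl_self] at this
    exact Set.not_nonempty_empty this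
  -- the transitive point visits the ball around x at infinitely many times
  obtain ⟨z, hz⟩ := htrans
  set S : Set ℤ := {m : ℤ | dist ((T ^ m) z) x < δ / 2} with hSdef
  have hSinf : S.Infinite := by
    intro hSfin
    have hFfin : ((fun m : ℤ => (T ^ m) z) '' S).Finite := hSfin.image _
    have hballinf : (Metric.ball x (δ / 2)).Infinite := by
      intro hbf
      exact key_open _ Metric.isOpen_ball x (Metric.mem_ball_self (by linarith)) hbf
    have hUne : (Metric.ball x (δ / 2) \ ((fun m : ℤ => (T ^ m) z) '' S)).Nonempty :=
      (hballinf.diff hFfin).nonempty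
    have hUopen : IsOpen (Metric.ball x (δ / 2) \ ((fun m : ℤ => (T ^ m) z) '' S)) :=
      Metric.isOpen_ball.sdiff hFfin.isClosed
    obtain ⟨p, ⟨m, hm⟩, hpU⟩ := hz.exists_mem_open hUopen hUne
    have hmS : m ∈ S := by
      simp only [hSdef, Set.mem_setOf_eq, hm]
      exact Metric.mem_ball.mp hpU.1
    exact hpU.2 ⟨m, hmS, hm⟩
  -- extract two visit times with difference larger than max N 1
  set Nt : ℤ := max N 1 with hNt
  obtain ⟨m₀, hm₀⟩ := hSinf.nonempty
  have hdiff : (S \ Set.Icc (m₀ - Nt) (m₀ + Nt)).Infinite :=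
    hSinf.diff (Set.finite_Icc _ _)
  obtain ⟨m', hm'⟩ := hdiff.nonempty
  obtain ⟨hm'S, hm'I⟩ := hm'
  simp only [Set.mem_Icc, not_and, not_le] at hm'I
  obtain ⟨a, haS, b, hbS, hab⟩ : ∃ a ∈ S, ∃ b ∈ S, Nt < b - a := by
    rcases le_or_gt (m₀ - Nt) m' with h1 | h1
    · exact ⟨m₀, hm₀, m', hm'S, by have := hm'I h1; omega⟩
    · exact ⟨m', hm'S, m₀, hm₀, by omega⟩
  set k : ℤ := b - a with hk
  have hk0 : 0 < k := by have : (1 : ℤ) ≤ Nt := le_max_right _ _; omega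
  have hkN : N < k := lt_of_le_of_lt (le_max_left _ _) hab
  have hpx : dist ((T ^ a) z) x < δ / 2 := haS
  have hkn : 0 < k.toNat := by omega
  have hck := hcon k.toNat hkn ((T ^ a) z)
    (by rw [dist_comm]; linarith)
  rw [Int.toNat_of_nonneg hk0.le] at hck
  have hTkp : (T ^ k) ((T ^ a) z) = (T ^ b) z := by
    rw [← Equiv.Perm.mul_apply, ← zpow_add, hk, sub_add_cancel]
  have hbx : dist ((T ^ b) z) x < δ / 2 := hbS
  have hfar := claim2 k hkN hk0
  have htri := dist_triangle ((T ^ k) x) ((T ^ k) ((T ^ a) z)) x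
  rw [hTkp] at htri hck
  linarith
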